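/- Under the assumptions v ∈ C¹([0,T]), v(0)=v(T)=0, |v'| ≤ a_max on [0,T], and ∫₀ᵀ v = s₀ > 0, one has T² ≥ 4 s₀ / a_max; equivalently, the time-minimal duration satisfies T ≥ 2√(s₀/a_max). -/

import Mathlib

open Set intervalIntegral

theorem stmt_2 (T s₀ amax : ℝ) (v : ℝ → ℝ)
    (hT : 0 ≤ T)
    (hv : ContDiffOn ℝ 1 v (Set.Icc 0 T))
    (hv0 : v 0 = 0) (hvT : v T = 0)
    (hamax : 0 < amax)
    (hba : ∀ t ∈ Set.Icc 0 T, |deriv v t| ≤ amax)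
    (hs : ∫ t in (0:ℝ)..T, v t = s₀) (hs0 : 0 < s₀) :
    T ^ 2 ≥ 4 * s₀ / amax := by
  rcases eq_or_lt_of_le hT with hT0 | hT0
  · exfalso
    rw [← hT0, intervalIntegral.integral_same] at hs
    linarith
  have hud : UniqueDiffOn ℝ (Set.Icc (0:ℝ) T) := uniqueDiffOn_Icc hT0
  set g := derivWithin v (Set.Icc 0 T) with hg
  have hgc : ContinuousOn g (Set.Icc 0 T) := hv.continuousOn_derivWithin hud le_rfl
  have hioo : ∀ x ∈ Set.Ioo (0:ℝ) T, |g x| ≤ amax := by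
    intro x hx
    rw [hg, derivWithin_of_mem_nhds (Icc_mem_nhds hx.1 hx.2)]
    exact hba x (Ioo_subset_Icc_self hx)
  have hend : ∀ x ∈ Set.Icc (0:ℝ) T, x = 0 ∨ x = T → |g x| ≤ amax := by
    intro x hx _
    have hxc : x ∈ closure (Set.Ioo (0:ℝ) T) := by
      rw [closure_Ioo hT0.ne]; exact hx
    have hne : (nhdsWithin x (Set.Ioo (0:ℝ) T)).NeBot :=
      mem_closure_iff_nhdsWithin_neBot.mp hxc
    have htend : Filter.Tendsto (fun y => |g y|) (nhdsWithin x (Set.Ioo (0:ℝ) T)) (nhds (|g x|)) :=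
      (((hgc x hx).mono Set.Ioo_subset_Icc_self).tendsto).abs
    exact le_of_tendsto htend (Filter.eventually_of_mem self_mem_nhdsWithin hioo)
  have hbound : ∀ x ∈ Set.Icc (0:ℝ) T, ‖g x‖ ≤ amax := by
    intro x hx
    rcases lt_or_eq_of_le hx.1 with h1 | h1
    · rcases lt_or_eq_of_le hx.2 with h2 | h2
      · exact hioo x ⟨h1, h2⟩
      · exact hend x hx (Or.inr h2)
    · exact hend x hx (Or.inl h1.symm)
  have hdiff : DifferentiableOn ℝ v (Set.Icc 0 T) := hv.differentiableOn one_ne_zero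
  have key : ∀ x ∈ Set.Icc (0:ℝ) T, ∀ y ∈ Set.Icc (0:ℝ) T, ‖v y - v x‖ ≤ amax * ‖y - x‖ :=
    fun x hx y hy =>
      (convex_Icc 0 T).norm_image_sub_le_of_norm_derivWithin_le hdiff hbound hx hy
  have h0T : (0:ℝ) ∈ Set.Icc (0:ℝ) T := ⟨le_refl 0, hT⟩
  have hTT : T ∈ Set.Icc (0:ℝ) T := ⟨hT, le_refl T⟩
  have h1 : ∀ t ∈ Set.Icc (0:ℝ) T, v t ≤ amax * t := by
    intro t ht
    have := key 0 h0T t ht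
    rw [hv0, sub_zero, sub_zero] at this
    calc v t ≤ |v t| := le_abs_self _
    _ ≤ amax * |t| := this
    _ = amax * t := by rw [abs_of_nonneg ht.1]
  have h2 : ∀ t ∈ Set.Icc (0:ℝ) T, v t ≤ amax * (T - t) := by
    intro t ht
    have := key T hTT t ht
    rw [hvT, sub_zero] at this
    calc v t ≤ |v t| := le_abs_self _
    _ ≤ amax * |t - T| := this
    _ = amax * (T - t) := by rw [abs_of_nonpos (by linarith [ht.2]), neg_sub]
  -- integrability
  have hvc : ContinuousOn v (Set.Icc 0 T) := hv.continuousOn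
  have hint1 : IntervalIntegrable v MeasureTheory.volume 0 (T/2) :=
    (hvc.mono (by rw [Set.uIcc_of_le (by linarith)]; exact Set.Icc_subset_Icc le_rfl (by linarith))).intervalIntegrable
  have hint2 : IntervalIntegrable v MeasureTheory.volume (T/2) T :=
    (hvc.mono (by rw [Set.uIcc_of_le (by linarith)]; exact Set.Icc_subset_Icc (by linarith) le_rfl)).intervalIntegrable
  have hsplit : s₀ = (∫ t in (0:ℝ)..(T/2), v t) + ∫ t in (T/2)..T, v t := by
    rw [← hs, intervalIntegral.integral_add_adjacent_intervals hint1 hint2]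
  have hI1 : (∫ t in (0:ℝ)..(T/2), v t) ≤ ∫ t in (0:ℝ)..(T/2), amax * t := by
    apply intervalIntegral.integral_mono_on (by linarith) hint1
    · exact (continuous_const.mul continuous_id).intervalIntegrable _ _
    · intro x hx
      exact h1 x ⟨hx.1, by linarith [hx.2]⟩
  have hI2 : (∫ t in (T/2)..T, v t) ≤ ∫ t in (T/2)..T, amax * (T - t) := by
    apply intervalIntegral.integral_mono_on (by linarith) hint2
    · exact (continuous_const.mul (continuous_const.sub continuous_id)).intervalIntegrable _ _
    · intro x hx
      exact h2 x ⟨by linarith [hx.1], hx.2⟩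
  have hc1 : (∫ t in (0:ℝ)..(T/2), amax * t) = amax * T^2 / 8 := by
    rw [intervalIntegral.integral_const_mul, integral_id]
    ring
  have hc2 : (∫ t in (T/2)..T, amax * (T - t)) = amax * T^2 / 8 := by
    have : (∫ t in (T/2)..T, amax * (T - t))
        = (∫ t in (T/2)..T, amax * T) - ∫ t in (T/2)..T, amax * t := by
      rw [← intervalIntegral.integral_sub]
      · congr 1; ext t; ring
      · exact intervalIntegrable_const
      · exact (continuous_const.mul continuous_id).intervalIntegrable _ _
    rw [this, intervalIntegral.integral_const_mul, intervalIntegral.integral_const_mul,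
      integral_id, intervalIntegral.integral_const, smul_eq_mul]
    ring
  have hfin : s₀ ≤ amax * T^2 / 4 := by
    rw [hsplit]
    calc (∫ t in (0:ℝ)..(T/2), v t) + ∫ t in (T/2)..T, v t
        ≤ amax * T^2 / 8 + amax * T^2 / 8 := by
          have := hI1; have := hI2; rw [hc1] at hI1; rw [hc2] at hI2; linarith
    _ = amax * T^2 / 4 := by ring
  rw [ge_iff_le, div_le_iff₀ hamax]
  nlinarith
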